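/- Let M be an n×n nonnegative real matrix such that every diagonal entry of M is nonzero and supp(M) = supp(Mᵀ) (i.e., m_{ij} ≠ 0 iff m_{ji} ≠ 0). Let v ∈ ℝ^n be strictly positive. Then there exist positive diagonal matrices D_ℓ and D_r such that S = D_ℓ M D_r satisfies S·1ₙ = v and 1ₙᵀ·S = vᵀ. -/

import Mathlib

open Matrix Finset

namespace ScalingAux

variable {n : ℕ}

noncomputable def Fobj (M : Matrix (Fin n) (Fin n) ℝ) (v : Fin n → ℝ)
    (z : (Fin n ⊕ Fin n) → ℝ) : ℝ :=
  (∑ i, ∑ j, M i j * Real.exp (z (Sum.inl i) + z (Sum.inr j)))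
    - ∑ i, v i * z (Sum.inl i) - ∑ j, v j * z (Sum.inr j)

def Esub (M : Matrix (Fin n) (Fin n) ℝ) : Submodule ℝ ((Fin n ⊕ Fin n) → ℝ) where
  carrier := {z | ∀ i j, M i j ≠ 0 → z (Sum.inl i) + z (Sum.inr j) = 0}
  add_mem' := by
    intro a b ha hb i j h
    have h1 := ha i j h; have h2 := hb i j h
    simp only [Pi.add_apply]; linarith
  zero_mem' := by intro i j h; simp
  smul_mem' := by
    intro c a ha i j h
    have h1 := ha i j h
    simp only [Pi.smul_apply, smul_eq_mul]
    rw [← mul_add, h1, mul_zero]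

lemma fobj_continuous (M : Matrix (Fin n) (Fin n) ℝ) (v : Fin n → ℝ) :
    Continuous (Fobj M v) := by
  unfold Fobj
  refine Continuous.sub (Continuous.sub ?_ ?_) ?_
  · exact continuous_finset_sum _ fun i _ => continuous_finset_sum _ fun j _ =>
      continuous_const.mul (Real.continuous_exp.comp
        ((continuous_apply (Sum.inl i)).add (continuous_apply (Sum.inr j))))
  · exact continuous_finset_sum _ fun i _ =>
      continuous_const.mul (continuous_apply (Sum.inl i))
  · exact continuous_finset_sum _ fun j _ =>
      continuous_const.mul (continuous_apply (Sum.inr j))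

lemma fobj_convex (M : Matrix (Fin n) (Fin n) ℝ) (hM : ∀ i j, 0 ≤ M i j)
    (v : Fin n → ℝ) {a b : ℝ} (ha : 0 ≤ a) (hb : 0 ≤ b) (hab : a + b = 1)
    (z₁ z₂ : (Fin n ⊕ Fin n) → ℝ) :
    Fobj M v (a • z₁ + b • z₂) ≤ a * Fobj M v z₁ + b * Fobj M v z₂ := by
  unfold Fobj
  have hexp : ∀ i j, M i j * Real.exp ((a • z₁ + b • z₂) (Sum.inl i) + (a • z₁ + b • z₂) (Sum.inr j))
      ≤ a * (M i j * Real.exp (z₁ (Sum.inl i) + z₁ (Sum.inr j)))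
        + b * (M i j * Real.exp (z₂ (Sum.inl i) + z₂ (Sum.inr j))) := by
    intro i j
    have key := convexOn_exp.2 (Set.mem_univ (z₁ (Sum.inl i) + z₁ (Sum.inr j)))
      (Set.mem_univ (z₂ (Sum.inl i) + z₂ (Sum.inr j))) ha hb hab
    simp only [smul_eq_mul] at key
    have harg : (a • z₁ + b • z₂) (Sum.inl i) + (a • z₁ + b • z₂) (Sum.inr j)
        = a * (z₁ (Sum.inl i) + z₁ (Sum.inr j)) + b * (z₂ (Sum.inl i) + z₂ (Sum.inr j)) := by
      simp only [Pi.add_apply, Pi.smul_apply, smul_eq_mul]; ring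
    rw [harg]
    calc M i j * Real.exp (a * (z₁ (Sum.inl i) + z₁ (Sum.inr j)) + b * (z₂ (Sum.inl i) + z₂ (Sum.inr j)))
        ≤ M i j * (a * Real.exp (z₁ (Sum.inl i) + z₁ (Sum.inr j)) + b * Real.exp (z₂ (Sum.inl i) + z₂ (Sum.inr j))) :=
          mul_le_mul_of_nonneg_left key (hM i j)
      _ = a * (M i j * Real.exp (z₁ (Sum.inl i) + z₁ (Sum.inr j)))
            + b * (M i j * Real.exp (z₂ (Sum.inl i) + z₂ (Sum.inr j))) := by ring
  have hsum : (∑ i, ∑ j, M i j * Real.exp ((a • z₁ + b • z₂) (Sum.inl i) + (a • z₁ + b • z₂) (Sum.inr j)))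
      ≤ a * (∑ i, ∑ j, M i j * Real.exp (z₁ (Sum.inl i) + z₁ (Sum.inr j)))
        + b * (∑ i, ∑ j, M i j * Real.exp (z₂ (Sum.inl i) + z₂ (Sum.inr j))) := by
    rw [Finset.mul_sum, Finset.mul_sum, ← Finset.sum_add_distrib]
    refine Finset.sum_le_sum fun i _ => ?_
    rw [Finset.mul_sum, Finset.mul_sum, ← Finset.sum_add_distrib]
    exact Finset.sum_le_sum fun j _ => hexp i j
  have hlin1 : (∑ i, v i * (a • z₁ + b • z₂) (Sum.inl i))
      = a * (∑ i, v i * z₁ (Sum.inl i)) + b * (∑ i, v i * z₂ (Sum.inl i)) := by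
    rw [Finset.mul_sum, Finset.mul_sum, ← Finset.sum_add_distrib]
    refine Finset.sum_congr rfl fun i _ => ?_
    simp only [Pi.add_apply, Pi.smul_apply, smul_eq_mul]; ring
  have hlin2 : (∑ j, v j * (a • z₁ + b • z₂) (Sum.inr j))
      = a * (∑ j, v j * z₁ (Sum.inr j)) + b * (∑ j, v j * z₂ (Sum.inr j)) := by
    rw [Finset.mul_sum, Finset.mul_sum, ← Finset.sum_add_distrib]
    refine Finset.sum_congr rfl fun j _ => ?_
    simp only [Pi.add_apply, Pi.smul_apply, smul_eq_mul]; ring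
  rw [hlin1, hlin2]
  linarith [hsum]

lemma fobj_add_mem (M : Matrix (Fin n) (Fin n) ℝ) (v : Fin n → ℝ)
    (hdiag : ∀ i, M i i ≠ 0) (z e : (Fin n ⊕ Fin n) → ℝ) (he : e ∈ Esub M) :
    Fobj M v (z + e) = Fobj M v z := by
  unfold Fobj
  have hexp : (∑ i, ∑ j, M i j * Real.exp ((z + e) (Sum.inl i) + (z + e) (Sum.inr j)))
      = ∑ i, ∑ j, M i j * Real.exp (z (Sum.inl i) + z (Sum.inr j)) := by
    refine Finset.sum_congr rfl fun i _ => Finset.sum_congr rfl fun j _ => ?_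
    by_cases h : M i j = 0
    · simp [h]
    · have h1 := he i j h
      have : (z + e) (Sum.inl i) + (z + e) (Sum.inr j) = z (Sum.inl i) + z (Sum.inr j) := by
        simp only [Pi.add_apply]; linarith
      rw [this]
  have hlin : (∑ i, v i * (z + e) (Sum.inl i)) + ∑ j, v j * (z + e) (Sum.inr j)
      = ((∑ i, v i * z (Sum.inl i)) + ∑ j, v j * z (Sum.inr j)) := by
    have he0 : ∀ i : Fin n, e (Sum.inl i) + e (Sum.inr i) = 0 := fun i => he i i (hdiag i)
    have : (∑ i, v i * (z + e) (Sum.inl i)) + ∑ j, v j * (z + e) (Sum.inr j)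
        = ((∑ i, v i * z (Sum.inl i)) + ∑ j, v j * z (Sum.inr j))
          + ∑ i, v i * (e (Sum.inl i) + e (Sum.inr i)) := by
      simp only [Pi.add_apply]
      rw [← Finset.sum_add_distrib, ← Finset.sum_add_distrib, ← Finset.sum_add_distrib]
      refine Finset.sum_congr rfl fun i _ => by ring
    rw [this]
    simp [he0]
  rw [hexp]
  linarith [hlin]

lemma fobj_ray (M : Matrix (Fin n) (Fin n) ℝ) (v : Fin n → ℝ)
    (d : (Fin n ⊕ Fin n) → ℝ) (t : ℝ) :
    Fobj M v (t • d) = (∑ i, ∑ j, M i j * Real.exp (t * (d (Sum.inl i) + d (Sum.inr j))))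
      - t * ((∑ i, v i * d (Sum.inl i)) + ∑ j, v j * d (Sum.inr j)) := by
  unfold Fobj
  have h1 : ∀ i j, (t • d) (Sum.inl i) + (t • d) (Sum.inr j)
      = t * (d (Sum.inl i) + d (Sum.inr j)) := by
    intro i j; simp only [Pi.smul_apply, smul_eq_mul]; ring
  simp only [h1]
  have h2 : (∑ i, v i * (t • d) (Sum.inl i)) = t * ∑ i, v i * d (Sum.inl i) := by
    rw [Finset.mul_sum]; exact Finset.sum_congr rfl fun i _ => by
      simp only [Pi.smul_apply, smul_eq_mul]; ring
  have h3 : (∑ j, v j * (t • d) (Sum.inr j)) = t * ∑ j, v j * d (Sum.inr j) := by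
    rw [Finset.mul_sum]; exact Finset.sum_congr rfl fun j _ => by
      simp only [Pi.smul_apply, smul_eq_mul]; ring
  rw [h2, h3]; ring

lemma exp_ge_quarter_sq {s : ℝ} (hs : 0 ≤ s) : s ^ 2 / 4 ≤ Real.exp s := by
  have h1 : s / 2 + 1 ≤ Real.exp (s / 2) := Real.add_one_le_exp _
  have h2 : Real.exp (s / 2) * Real.exp (s / 2) = Real.exp s := by
    rw [← Real.exp_add]; ring_nf
  nlinarith [Real.exp_pos (s / 2)]


lemma ray_unbounded (M : Matrix (Fin n) (Fin n) ℝ) (hM : ∀ i j, 0 ≤ M i j)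
    (hdiag : ∀ i, M i i ≠ 0) (hsymm : ∀ i j, M i j ≠ 0 ↔ M j i ≠ 0)
    (v : Fin n → ℝ) (hv : ∀ i, 0 < v i)
    (W : Submodule ℝ ((Fin n ⊕ Fin n) → ℝ)) (hcompl : IsCompl (Esub M) W)
    (d : (Fin n ⊕ Fin n) → ℝ) (hdW : d ∈ W) (hd : d ≠ 0) (B : ℝ)
    (hb : ∀ t : ℝ, 0 ≤ t → Fobj M v (t • d) ≤ B) : False := by
  set c : ℝ := (∑ i, v i * d (Sum.inl i)) + ∑ j, v j * d (Sum.inr j) with hc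
  have hray : ∀ t : ℝ, Fobj M v (t • d)
      = (∑ i, ∑ j, M i j * Real.exp (t * (d (Sum.inl i) + d (Sum.inr j)))) - t * c :=
    fun t => fobj_ray M v d t
  by_cases hA : ∃ i j, M i j ≠ 0 ∧ 0 < d (Sum.inl i) + d (Sum.inr j)
  · obtain ⟨i0, j0, hMij, hpos⟩ := hA
    set a : ℝ := d (Sum.inl i0) + d (Sum.inr j0) with hadef
    have hm : 0 < M i0 j0 := lt_of_le_of_ne (hM i0 j0) (Ne.symm hMij)
    set q : ℝ := M i0 j0 * a ^ 2 / 4 with hq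
    have hq0 : 0 < q := by positivity
    set t : ℝ := max 1 ((|B| + |c| + 1) / q) with ht
    have ht1 : (1:ℝ) ≤ t := le_max_left _ _
    have ht0 : 0 ≤ t := by linarith
    have hqt : |B| + |c| + 1 ≤ q * t := by
      have := le_max_right 1 ((|B| + |c| + 1) / q)
      calc |B| + |c| + 1 = q * ((|B| + |c| + 1) / q) := by field_simp
        _ ≤ q * t := by
            exact mul_le_mul_of_nonneg_left this (le_of_lt hq0)
    -- lower bound on the double sum by a single term
    have hterm : M i0 j0 * Real.exp (t * a)
        ≤ ∑ i, ∑ j, M i j * Real.exp (t * (d (Sum.inl i) + d (Sum.inr j))) := by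
      have hnn : ∀ i : Fin n, 0 ≤ ∑ j, M i j * Real.exp (t * (d (Sum.inl i) + d (Sum.inr j))) :=
        fun i => Finset.sum_nonneg fun j _ => mul_nonneg (hM i j) (Real.exp_pos _).le
      calc M i0 j0 * Real.exp (t * a)
          ≤ ∑ j, M i0 j * Real.exp (t * (d (Sum.inl i0) + d (Sum.inr j))) := by
            refine Finset.single_le_sum (f := fun j => M i0 j * Real.exp (t * (d (Sum.inl i0) + d (Sum.inr j))))
              (fun j _ => mul_nonneg (hM i0 j) (Real.exp_pos _).le) (Finset.mem_univ j0)
        _ ≤ ∑ i, ∑ j, M i j * Real.exp (t * (d (Sum.inl i) + d (Sum.inr j))) :=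
            Finset.single_le_sum (f := fun i => ∑ j, M i j * Real.exp (t * (d (Sum.inl i) + d (Sum.inr j))))
              (fun i _ => hnn i) (Finset.mem_univ i0)
    have hexp : (t * a) ^ 2 / 4 ≤ Real.exp (t * a) :=
      exp_ge_quarter_sq (mul_nonneg ht0 hpos.le)
    have hlow : q * t ^ 2 - t * c ≤ Fobj M v (t • d) := by
      rw [hray t]
      have : q * t ^ 2 ≤ M i0 j0 * Real.exp (t * a) := by
        have h1 : M i0 j0 * ((t * a) ^ 2 / 4) ≤ M i0 j0 * Real.exp (t * a) :=
          mul_le_mul_of_nonneg_left hexp hm.le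
        calc q * t ^ 2 = M i0 j0 * ((t * a) ^ 2 / 4) := by rw [hq]; ring
          _ ≤ _ := h1
      linarith [hterm]
    have hBf := hb t ht0
    have habs1 : c ≤ |c| := le_abs_self c
    have habs2 : B ≤ |B| := le_abs_self B
    nlinarith [mul_nonneg (by linarith : (0:ℝ) ≤ t - 1) (by linarith [abs_nonneg B] : (0:ℝ) ≤ q * t - c)]
  · push_neg at hA
    have hnp : ∀ i j, M i j ≠ 0 → d (Sum.inl i) + d (Sum.inr j) ≤ 0 := hA
    have hceq : c = ∑ i, v i * (d (Sum.inl i) + d (Sum.inr i)) := by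
      rw [hc, ← Finset.sum_add_distrib]
      exact Finset.sum_congr rfl fun i _ => by ring
    have hterms : ∀ i : Fin n, v i * (d (Sum.inl i) + d (Sum.inr i)) ≤ 0 :=
      fun i => mul_nonpos_of_nonneg_of_nonpos (hv i).le (hnp i i (hdiag i))
    have hc0 : c ≤ 0 := hceq ▸ Finset.sum_nonpos fun i _ => hterms i
    rcases eq_or_lt_of_le hc0 with hceq0 | hclt
    · -- c = 0 : d lies in Esub, contradiction with IsCompl
      have hall : ∀ i ∈ Finset.univ, v i * (d (Sum.inl i) + d (Sum.inr i)) = 0 := by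
        rw [← Finset.sum_eq_zero_iff_of_nonpos fun i _ => hterms i]
        rw [← hceq]; exact hceq0
      have hdiag0 : ∀ i : Fin n, d (Sum.inl i) + d (Sum.inr i) = 0 := by
        intro i
        have := hall i (Finset.mem_univ i)
        exact (mul_eq_zero.mp this).resolve_left (hv i).ne'
      have hdE : d ∈ Esub M := by
        intro i j h
        have h1 : d (Sum.inl i) + d (Sum.inr j) ≤ 0 := hnp i j h
        have h2 : d (Sum.inl j) + d (Sum.inr i) ≤ 0 := hnp j i ((hsymm i j).mp h)
        have h3 := hdiag0 i
        have h4 := hdiag0 j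
        linarith
      have : d ∈ Esub M ⊓ W := ⟨hdE, hdW⟩
      rw [hcompl.inf_eq_bot] at this
      exact hd (Submodule.mem_bot ℝ |>.mp this)
    · -- c < 0 : linear growth
      set t : ℝ := (|B| + 1) / (-c) with ht
      have ht0 : 0 ≤ t := by
        apply div_nonneg; positivity
        linarith
      have h1 : Fobj M v (t • d) ≥ - (t * c) := by
        rw [hray t]
        have : 0 ≤ ∑ i, ∑ j, M i j * Real.exp (t * (d (Sum.inl i) + d (Sum.inr j))) :=
          Finset.sum_nonneg fun i _ => Finset.sum_nonneg fun j _ =>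
            mul_nonneg (hM i j) (Real.exp_pos _).le
        linarith
      have h2 : - (t * c) = |B| + 1 := by
        have hcc : -c ≠ 0 := by linarith
        have h3 := div_mul_cancel₀ (|B| + 1) hcc
        rw [ht]; linear_combination h3
      have := hb t ht0
      have habs : B ≤ |B| := le_abs_self B
      linarith [h1, h2 ▸ h1]


lemma exists_global_min (M : Matrix (Fin n) (Fin n) ℝ) (hM : ∀ i j, 0 ≤ M i j)
    (hdiag : ∀ i, M i i ≠ 0) (hsymm : ∀ i j, M i j ≠ 0 ↔ M j i ≠ 0)
    (v : Fin n → ℝ) (hv : ∀ i, 0 < v i) :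
    ∃ z : (Fin n ⊕ Fin n) → ℝ, ∀ z', Fobj M v z ≤ Fobj M v z' := by
  obtain ⟨W, hcompl⟩ := Submodule.exists_isCompl (Esub M)
  set f := Fobj M v with hf
  have hfc : Continuous f := fobj_continuous M v
  set S : Set ((Fin n ⊕ Fin n) → ℝ) := {z | z ∈ W ∧ f z ≤ f 0} with hS
  have hWclosed : IsClosed (W : Set ((Fin n ⊕ Fin n) → ℝ)) :=
    Submodule.closed_of_finiteDimensional W
  have hSclosed : IsClosed S := by
    have : S = (W : Set ((Fin n ⊕ Fin n) → ℝ)) ∩ f ⁻¹' (Set.Iic (f 0)) := rfl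
    rw [this]
    exact hWclosed.inter (isClosed_Iic.preimage hfc)
  have hSbdd : Bornology.IsBounded S := by
    by_contra hub
    have hbig : ∀ k : ℕ, ∃ z, z ∈ S ∧ (k : ℝ) < ‖z‖ := by
      intro k
      by_contra h
      push_neg at h
      exact hub (isBounded_iff_forall_norm_le.mpr ⟨k, fun z hz => h z hz⟩)
    choose zs hzS hzn using hbig
    have hznorm : ∀ k : ℕ, (0:ℝ) < ‖zs k‖ := fun k => lt_of_le_of_lt (Nat.cast_nonneg k) (hzn k)
    set ds : ℕ → ((Fin n ⊕ Fin n) → ℝ) := fun k => ‖zs k‖⁻¹ • zs k with hds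
    have hdsphere : ∀ k, ds k ∈ Metric.sphere (0 : (Fin n ⊕ Fin n) → ℝ) 1 := by
      intro k
      rw [mem_sphere_zero_iff_norm, hds]
      rw [norm_smul, norm_inv, norm_norm]
      exact inv_mul_cancel₀ (hznorm k).ne'
    obtain ⟨d, hdsph, φ, hφ, hdlim⟩ :=
      (isCompact_sphere (0 : (Fin n ⊕ Fin n) → ℝ) 1).tendsto_subseq hdsphere
    have hdnorm : ‖d‖ = 1 := mem_sphere_zero_iff_norm.mp hdsph
    have hdW : d ∈ W := by
      have hmem : ∀ k, (ds ∘ φ) k ∈ (W : Set ((Fin n ⊕ Fin n) → ℝ)) := by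
        intro k
        exact W.smul_mem _ (hzS (φ k)).1
      exact hWclosed.mem_of_tendsto hdlim (Filter.Eventually.of_forall hmem)
    have hd0 : d ≠ 0 := by
      intro h
      rw [h, norm_zero] at hdnorm
      norm_num at hdnorm
    have hbound : ∀ t : ℝ, 0 ≤ t → f (t • d) ≤ f 0 := by
      intro t ht
      have hev : ∀ᶠ k in Filter.atTop, f (t • (ds (φ k))) ≤ f 0 := by
        have hk0 : ∀ᶠ k in Filter.atTop, t ≤ (φ k : ℝ) := by
          obtain ⟨K, hK⟩ := exists_nat_ge t
          refine Filter.eventually_atTop.mpr ⟨K, fun k hk => ?_⟩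
          calc t ≤ (K : ℝ) := hK
            _ ≤ (k : ℝ) := Nat.cast_le.mpr hk
            _ ≤ (φ k : ℝ) := Nat.cast_le.mpr (hφ.le_apply)
        filter_upwards [hk0] with k hk
        set r : ℝ := ‖zs (φ k)‖ with hr
        have hrt : t < r := lt_of_le_of_lt hk (hzn (φ k))
        have hr0 : 0 < r := hznorm (φ k)
        set θ : ℝ := t / r with hθ
        have hθ0 : 0 ≤ θ := div_nonneg ht hr0.le
        have hθ1 : θ ≤ 1 := (div_le_one hr0).mpr hrt.le
        have heq : t • (ds (φ k)) = θ • zs (φ k) + (1 - θ) • (0 : (Fin n ⊕ Fin n) → ℝ) := by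
          rw [smul_zero, add_zero, hds]
          rw [smul_smul, hθ, hr, div_eq_mul_inv]
        have hcvx := fobj_convex M hM v hθ0 (by linarith : (0:ℝ) ≤ 1 - θ)
          (by ring) (zs (φ k)) 0
        rw [heq]
        calc f (θ • zs (φ k) + (1 - θ) • (0 : (Fin n ⊕ Fin n) → ℝ))
            ≤ θ * f (zs (φ k)) + (1 - θ) * f 0 := hcvx
          _ ≤ θ * f 0 + (1 - θ) * f 0 := by
              have := (hzS (φ k)).2
              nlinarith
          _ = f 0 := by ring
      have hcont : Filter.Tendsto (fun k => f (t • (ds (φ k)))) Filter.atTop (nhds (f (t • d))) := by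
        have h1 : Filter.Tendsto (fun k => t • (ds (φ k))) Filter.atTop (nhds (t • d)) :=
          hdlim.const_smul t
        exact (hfc.continuousAt.tendsto.comp h1)
      exact le_of_tendsto hcont hev
    exact ray_unbounded M hM hdiag hsymm v hv W hcompl d hdW hd0 (f 0) hbound
  have hScompact : IsCompact S := Metric.isCompact_of_isClosed_isBounded hSclosed hSbdd
  have hSne : S.Nonempty := ⟨0, W.zero_mem, le_refl _⟩
  obtain ⟨z, hzS, hzmin⟩ := hScompact.exists_isMinOn hSne hfc.continuousOn
  refine ⟨z, fun z' => ?_⟩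
  have hsup : z' ∈ Esub M ⊔ W := by rw [hcompl.sup_eq_top]; trivial
  obtain ⟨e, he, w, hw, heq⟩ := Submodule.mem_sup.mp hsup
  have hfz' : f z' = f w := by
    rw [← heq, add_comm]
    exact fobj_add_mem M v hdiag w e he
  rw [hfz']
  by_cases hcase : f w ≤ f 0
  · exact hzmin ⟨hw, hcase⟩
  · calc f z ≤ f 0 := hzS.2
      _ ≤ f w := le_of_not_ge hcase


lemma fobj_hasDerivAt (M : Matrix (Fin n) (Fin n) ℝ) (v : Fin n → ℝ)
    (z δ : (Fin n ⊕ Fin n) → ℝ) :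
    HasDerivAt (fun t : ℝ => Fobj M v (z + t • δ))
      ((∑ i, ∑ j, M i j * ((δ (Sum.inl i) + δ (Sum.inr j))
          * Real.exp (z (Sum.inl i) + z (Sum.inr j))))
        - (∑ i, v i * δ (Sum.inl i)) - ∑ j, v j * δ (Sum.inr j)) 0 := by
  have hterm : ∀ i j : Fin n, HasDerivAt
      (fun t : ℝ => M i j * Real.exp ((z (Sum.inl i) + t * δ (Sum.inl i)) + (z (Sum.inr j) + t * δ (Sum.inr j))))
      (M i j * ((δ (Sum.inl i) + δ (Sum.inr j)) * Real.exp (z (Sum.inl i) + z (Sum.inr j)))) 0 := by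
    intro i j
    have hin : HasDerivAt
        (fun t : ℝ => (z (Sum.inl i) + t * δ (Sum.inl i)) + (z (Sum.inr j) + t * δ (Sum.inr j)))
        (δ (Sum.inl i) + δ (Sum.inr j)) 0 :=
      (((hasDerivAt_mul_const (δ (Sum.inl i))).const_add (z (Sum.inl i))).add
        ((hasDerivAt_mul_const (δ (Sum.inr j))).const_add (z (Sum.inr j))))
    have := (hin.exp).const_mul (M i j)
    simpa [mul_comm] using this
  have hsum : HasDerivAt
      (fun t : ℝ => ∑ i, ∑ j, M i j * Real.exp ((z (Sum.inl i) + t * δ (Sum.inl i)) + (z (Sum.inr j) + t * δ (Sum.inr j))))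
      (∑ i, ∑ j, M i j * ((δ (Sum.inl i) + δ (Sum.inr j)) * Real.exp (z (Sum.inl i) + z (Sum.inr j)))) 0 :=
    HasDerivAt.fun_sum fun i _ => HasDerivAt.fun_sum fun j _ => hterm i j
  have hlin1 : HasDerivAt (fun t : ℝ => ∑ i, v i * (z (Sum.inl i) + t * δ (Sum.inl i)))
      (∑ i, v i * δ (Sum.inl i)) 0 :=
    HasDerivAt.fun_sum fun i _ =>
      ((hasDerivAt_mul_const (δ (Sum.inl i))).const_add (z (Sum.inl i))).const_mul (v i)
  have hlin2 : HasDerivAt (fun t : ℝ => ∑ j, v j * (z (Sum.inr j) + t * δ (Sum.inr j)))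
      (∑ j, v j * δ (Sum.inr j)) 0 :=
    HasDerivAt.fun_sum fun j _ =>
      ((hasDerivAt_mul_const (δ (Sum.inr j))).const_add (z (Sum.inr j))).const_mul (v j)
  have htotal := (hsum.sub hlin1).sub hlin2
  have hfun : (fun t : ℝ => Fobj M v (z + t • δ))
      = fun t : ℝ => (∑ i, ∑ j, M i j * Real.exp ((z (Sum.inl i) + t * δ (Sum.inl i)) + (z (Sum.inr j) + t * δ (Sum.inr j))))
        - (∑ i, v i * (z (Sum.inl i) + t * δ (Sum.inl i)))
        - ∑ j, v j * (z (Sum.inr j) + t * δ (Sum.inr j)) := by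
    funext t
    unfold Fobj
    simp only [Pi.add_apply, Pi.smul_apply, smul_eq_mul]
  rw [hfun]
  exact htotal

lemma min_stationary (M : Matrix (Fin n) (Fin n) ℝ) (v : Fin n → ℝ)
    (z : (Fin n ⊕ Fin n) → ℝ) (hmin : ∀ z', Fobj M v z ≤ Fobj M v z')
    (δ : (Fin n ⊕ Fin n) → ℝ) :
    (∑ i, ∑ j, M i j * ((δ (Sum.inl i) + δ (Sum.inr j))
        * Real.exp (z (Sum.inl i) + z (Sum.inr j))))
      - (∑ i, v i * δ (Sum.inl i)) - (∑ j, v j * δ (Sum.inr j)) = 0 := by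
  have hloc : IsLocalMin (fun t : ℝ => Fobj M v (z + t • δ)) 0 := by
    apply Filter.Eventually.of_forall
    intro t
    simpa using hmin (z + t • δ)
  exact hloc.hasDerivAt_eq_zero (fobj_hasDerivAt M v z δ)

lemma row_eq (M : Matrix (Fin n) (Fin n) ℝ) (v : Fin n → ℝ)
    (z : (Fin n ⊕ Fin n) → ℝ) (hmin : ∀ z', Fobj M v z ≤ Fobj M v z') (i0 : Fin n) :
    ∑ j, M i0 j * Real.exp (z (Sum.inl i0) + z (Sum.inr j)) = v i0 := by
  have h := min_stationary M v z hmin (Pi.single (Sum.inl i0) 1)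
  simp only [Pi.single_apply, Sum.inl.injEq, mul_ite, ite_mul, mul_zero, zero_mul,
    mul_one, one_mul, add_zero, zero_add, Finset.sum_ite_eq', Finset.mem_univ, if_true,
    reduceCtorEq, if_false, Finset.sum_const_zero, sub_zero] at h
  have hsplit : ∀ x : Fin n,
      (∑ x1 : Fin n, if x = i0 then M x x1 * Real.exp (z (Sum.inl x) + z (Sum.inr x1)) else 0)
      = if x = i0 then ∑ x1 : Fin n, M x x1 * Real.exp (z (Sum.inl x) + z (Sum.inr x1)) else 0 := by
    intro x; split <;> simp
  simp only [hsplit, Finset.sum_ite_eq', Finset.mem_univ, if_true] at h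
  linarith [h]


lemma col_eq (M : Matrix (Fin n) (Fin n) ℝ) (v : Fin n → ℝ)
    (z : (Fin n ⊕ Fin n) → ℝ) (hmin : ∀ z', Fobj M v z ≤ Fobj M v z') (j0 : Fin n) :
    ∑ i, M i j0 * Real.exp (z (Sum.inl i) + z (Sum.inr j0)) = v j0 := by
  have h := min_stationary M v z hmin (Pi.single (Sum.inr j0) 1)
  simp only [Pi.single_apply, Sum.inr.injEq, mul_ite, ite_mul, mul_zero, zero_mul,
    mul_one, one_mul, add_zero, zero_add, Finset.sum_ite_eq', Finset.mem_univ, if_true,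
    reduceCtorEq, if_false, Finset.sum_const_zero, sub_zero, zero_sub] at h
  linarith [h]

end ScalingAux

/-- If a square nonnegative matrix `M` has nonzero diagonal entries and a
symmetric support pattern, then for any strictly positive vector `v` there
exist positive diagonal scalings `D_ℓ, D_r` such that `S = D_ℓ M D_r` has
row sums `v` and column sums `v`. -/
theorem exists_scaling_common_row_col_sums
    {n : ℕ} (M : Matrix (Fin n) (Fin n) ℝ)
    (hM : ∀ i j, 0 ≤ M i j)
    (hdiag : ∀ i, M i i ≠ 0)
    (hsymm : ∀ i j, M i j ≠ 0 ↔ M j i ≠ 0)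
    (v : Fin n → ℝ) (hv : ∀ i, 0 < v i) :
    ∃ (dℓ dr : Fin n → ℝ), (∀ i, 0 < dℓ i) ∧ (∀ j, 0 < dr j) ∧
      (∀ i, ∑ j, (diagonal dℓ * M * diagonal dr) i j = v i) ∧
      (∀ j, ∑ i, (diagonal dℓ * M * diagonal dr) i j = v j) := by
  obtain ⟨z, hmin⟩ := ScalingAux.exists_global_min M hM hdiag hsymm v hv
  refine ⟨fun i => Real.exp (z (Sum.inl i)), fun j => Real.exp (z (Sum.inr j)),
    fun i => Real.exp_pos _, fun j => Real.exp_pos _, ?_, ?_⟩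
  · intro i
    have h := ScalingAux.row_eq M v z hmin i
    rw [← h]
    refine Finset.sum_congr rfl fun j _ => ?_
    rw [Matrix.mul_diagonal, Matrix.diagonal_mul, Real.exp_add]
    ring
  · intro j
    have h := ScalingAux.col_eq M v z hmin j
    rw [← h]
    refine Finset.sum_congr rfl fun i _ => ?_
    rw [Matrix.mul_diagonal, Matrix.diagonal_mul, Real.exp_add]
    ring
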